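/- Under the stated setup and algorithmic hypotheses, f(A, Z, H) ≥ 0 whenever H ∈ S₂, and the series Σ_{k=0}^∞ (λ/2)(‖Z^{k+1} − Z^k‖² + ‖A^{k+1} − A^k‖²) converges with Σ_{k=0}^∞ (λ/2)(‖Z^{k+1} − Z^k‖² + ‖A^{k+1} − A^k‖²) ≤ f(A⁰, Z⁰, H⁰). -/
import Mathlib


open Matrix BigOperators Filter Topology

/-- Frobenius norm of a real matrix. -/
noncomputable def frob {m n : ℕ} (W : Matrix (Fin m) (Fin n) ℝ) : ℝ :=
  Real.sqrt (∑ i, ∑ j, (W i j) ^ 2)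

/-- Laplacian `L_S = D_S - (|S| + |S|ᵀ)/2` of a square real matrix `S`. -/
noncomputable def lap {n : ℕ} (S : Matrix (Fin n) (Fin n) ℝ) : Matrix (Fin n) (Fin n) ℝ :=
  Matrix.diagonal (fun i => ∑ j, (|S i j| + |S j i|) / 2)
    - (1 / 2 : ℝ) • (S.map (fun x => |x|) + (S.map (fun x => |x|))ᵀ)

/-- The objective `f(A, Z, H)` of the penalized DGSL model. -/
noncomputable def fObj {n k d : ℕ} (X : Matrix (Fin d) (Fin n) ℝ)
    (W M C : Matrix (Fin n) (Fin n) ℝ) (lam lamZ lamM a1 a2 : ℝ)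
    (A Z : Matrix (Fin n) (Fin n) ℝ) (H : Matrix (Fin k) (Fin n) ℝ) : ℝ :=
  (1 / 2) * frob (X - X * A) ^ 2 + (lam / 2) * frob (A - Z) ^ 2
    + lamZ * (∑ i, ∑ j, |Z i j|)
    + a1 * trace (H * lap Z * Hᵀ) / trace (H * lap C * Hᵀ)
    + a2 * trace (H * (lap W + lamM • lap M) * Hᵀ) / trace (H * lap C * Hᵀ)

lemma frob_sq {m n : ℕ} (W : Matrix (Fin m) (Fin n) ℝ) :
    frob W ^ 2 = ∑ i, ∑ j, (W i j) ^ 2 := by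
  rw [frob, Real.sq_sqrt]; positivity

lemma frob_sq_nonneg {m n : ℕ} (W : Matrix (Fin m) (Fin n) ℝ) :
    0 ≤ frob W ^ 2 := by rw [frob_sq]; positivity

lemma frob_sq_neg {m n : ℕ} (U V : Matrix (Fin m) (Fin n) ℝ) :
    frob (U - V) ^ 2 = frob (V - U) ^ 2 := by
  simp only [frob_sq]
  exact Finset.sum_congr rfl (fun i _ => Finset.sum_congr rfl (fun j _ => by
    simp [Matrix.sub_apply]; ring))

lemma frob_sq_combo {m n : ℕ} (U V Zc : Matrix (Fin m) (Fin n) ℝ) (t : ℝ) :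
    frob (((1-t) • U + t • V) - Zc) ^ 2
      = (1-t) * frob (U - Zc)^2 + t * frob (V - Zc)^2 - t*(1-t) * frob (U - V)^2 := by
  simp only [frob_sq, Finset.mul_sum, ← Finset.sum_sub_distrib, ← Finset.sum_add_distrib]
  refine Finset.sum_congr rfl (fun i _ => Finset.sum_congr rfl (fun j _ => ?_))
  simp only [Matrix.sub_apply, Matrix.add_apply, Matrix.smul_apply, smul_eq_mul]
  ring

lemma limit_trick {c fS fA r : ℝ} (hc : 0 < c) (hr : 0 ≤ r)
    (h : ∀ t : ℝ, 0 < t → t ≤ 1 → fS + c*(1-t)*r ≤ fA) : fS + c*r ≤ fA := by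
  refine le_of_forall_pos_le_add (fun ε hε => ?_)
  have ht1 : (0:ℝ) < ε/(2*c*(r+1)) := by positivity
  have h0 : 0 < min 1 (ε/(2*c*(r+1))) := lt_min one_pos ht1
  have h1 : min 1 (ε/(2*c*(r+1))) ≤ 1 := min_le_left _ _
  have hkey := h _ h0 h1
  have htle : min 1 (ε/(2*c*(r+1))) ≤ ε/(2*c*(r+1)) := min_le_right _ _
  have hmul : c * min 1 (ε/(2*c*(r+1))) * r ≤ ε := by
    have h2 : c * min 1 (ε/(2*c*(r+1))) * r ≤ c * (ε/(2*c*(r+1))) * r := by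
      have := mul_le_mul_of_nonneg_right (mul_le_mul_of_nonneg_left htle hc.le) hr
      linarith
    have h3 : c * (ε/(2*c*(r+1))) * r ≤ ε := by
      rw [show c * (ε/(2*c*(r+1))) * r = ε * (c*r) / (2*c*(r+1)) from by ring,
        div_le_iff₀ (by positivity)]
      nlinarith [mul_pos hε hc, mul_nonneg (mul_nonneg hε.le hc.le) hr]
    linarith
  nlinarith

lemma lap_apply {n : ℕ} (S : Matrix (Fin n) (Fin n) ℝ) (i j : Fin n) :
    lap S i j = (if i = j then ∑ l, (|S i l| + |S l i|) / 2 else 0)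
      - (1/2) * (|S i j| + |S j i|) := by
  simp [lap, Matrix.diagonal, Matrix.sub_apply, Matrix.smul_apply, Matrix.add_apply,
    Matrix.map_apply, Matrix.transpose_apply]
  ring

lemma trace_lap {n k : ℕ} (S : Matrix (Fin n) (Fin n) ℝ) (H : Matrix (Fin k) (Fin n) ℝ) :
    trace (H * lap S * Hᵀ) =
      ∑ i, ∑ j, |S i j| * ((1/2) * ∑ p, (H p i - H p j)^2) := by
  set P : Fin n → Fin n → ℝ := fun i j => ∑ p, H p i * H p j with hP
  have Psymm : ∀ i j, P i j = P j i := by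
    intro i j; exact Finset.sum_congr rfl (fun p _ => mul_comm _ _)
  have expand : trace (H * lap S * Hᵀ) =
      ∑ p, ∑ j, (∑ i, H p i * lap S i j) * H p j := by
    simp [Matrix.trace, Matrix.mul_apply, Matrix.diag, Matrix.transpose_apply]
  have e2 : trace (H * lap S * Hᵀ) = ∑ i, ∑ j, lap S i j * P i j := by
    rw [expand]
    have h1 : ∀ p, ∑ j, (∑ i, H p i * lap S i j) * H p j =
        ∑ j, ∑ i, H p i * lap S i j * H p j := by
      intro p; exact Finset.sum_congr rfl (fun j _ => by rw [Finset.sum_mul])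
    have tri : ∀ (f : Fin n → Fin n → Fin k → ℝ),
        ∑ p, ∑ j, ∑ i, f i j p = ∑ i, ∑ j, ∑ p, f i j p := by
      intro f
      rw [show (∑ p, ∑ j, ∑ i, f i j p) = ∑ p, ∑ i, ∑ j, f i j p from
        Finset.sum_congr rfl (fun p _ => Finset.sum_comm), Finset.sum_comm]
      exact Finset.sum_congr rfl (fun i _ => Finset.sum_comm)
    simp only [h1, hP, Finset.mul_sum]
    rw [tri (fun i j p => H p i * lap S i j * H p j)]
    exact Finset.sum_congr rfl (fun i _ => Finset.sum_congr rfl (fun j _ =>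
      Finset.sum_congr rfl (fun p _ => by ring)))
  have e3 : ∀ i, ∑ j, lap S i j * P i j =
      ∑ j, ((|S i j| + |S j i|)/2) * (P i i - P i j) := by
    intro i
    have : ∀ j, lap S i j * P i j =
        (if i = j then (∑ l, (|S i l| + |S l i|) / 2) * P i j else 0)
          - (1/2) * (|S i j| + |S j i|) * P i j := by
      intro j; rw [lap_apply]; split <;> ring
    simp only [this]
    rw [Finset.sum_sub_distrib, Finset.sum_ite_eq]
    simp only [Finset.mem_univ, if_true, Finset.sum_mul]
    rw [← Finset.sum_sub_distrib]
    refine Finset.sum_congr rfl (fun j _ => by ring)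
  have key : ∀ i j, ∑ p, (H p i - H p j)^2 = P i i - 2 * P i j + P j j := by
    intro i j
    simp only [hP, Finset.mul_sum, ← Finset.sum_sub_distrib, ← Finset.sum_add_distrib]
    exact Finset.sum_congr rfl (fun p _ => by ring)
  have swap : ∑ i, ∑ j, (|S j i|/2) * (P i i - P i j)
      = ∑ i, ∑ j, (|S i j|/2) * (P j j - P i j) := by
    rw [Finset.sum_comm]
    exact Finset.sum_congr rfl (fun i _ => Finset.sum_congr rfl
      (fun j _ => by rw [Psymm i j]))
  calc trace (H * lap S * Hᵀ) = ∑ i, ∑ j, lap S i j * P i j := e2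
    _ = ∑ i, ∑ j, ((|S i j| + |S j i|)/2) * (P i i - P i j) :=
        Finset.sum_congr rfl (fun i _ => e3 i)
    _ = ∑ i, ∑ j, ((|S i j|/2) * (P i i - P i j) + (|S j i|/2) * (P i i - P i j)) :=
        Finset.sum_congr rfl (fun i _ => Finset.sum_congr rfl (fun j _ => by ring))
    _ = ∑ i, ∑ j, (|S i j|/2) * (P i i - P i j)
          + ∑ i, ∑ j, (|S j i|/2) * (P i i - P i j) := by
        rw [← Finset.sum_add_distrib]
        exact Finset.sum_congr rfl (fun i _ => Finset.sum_add_distrib)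
    _ = ∑ i, ∑ j, (|S i j|/2) * (P i i - P i j)
          + ∑ i, ∑ j, (|S i j|/2) * (P j j - P i j) := by rw [swap]
    _ = ∑ i, ∑ j, |S i j| * ((1/2) * ∑ p, (H p i - H p j)^2) := by
        rw [← Finset.sum_add_distrib]
        refine Finset.sum_congr rfl (fun i _ => ?_)
        rw [← Finset.sum_add_distrib]
        refine Finset.sum_congr rfl (fun j _ => ?_)
        rw [key]; ring

lemma trace_lap_nonneg {n k : ℕ} (S : Matrix (Fin n) (Fin n) ℝ)
    (H : Matrix (Fin k) (Fin n) ℝ) : 0 ≤ trace (H * lap S * Hᵀ) := by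
  rw [trace_lap]; positivity

lemma abs_combo {x y t : ℝ} (ht0 : 0 ≤ t) (ht1 : t ≤ 1) :
    |(1-t)*x + t*y| ≤ (1-t)*|x| + t*|y| := by
  calc |(1-t)*x + t*y| ≤ |(1-t)*x| + |t*y| := abs_add_le _ _
    _ = (1-t)*|x| + t*|y| := by
        rw [abs_mul, abs_mul, abs_of_nonneg (by linarith : (0:ℝ) ≤ 1-t), abs_of_nonneg ht0]

section
variable {n k d : ℕ} (X : Matrix (Fin d) (Fin n) ℝ) (W M C : Matrix (Fin n) (Fin n) ℝ)
  (lam lamZ lamM a1 a2 : ℝ)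

lemma trace_lap_WM {H : Matrix (Fin k) (Fin n) ℝ} :
    trace (H * (lap W + lamM • lap M) * Hᵀ)
      = trace (H * lap W * Hᵀ) + lamM * trace (H * lap M * Hᵀ) := by
  rw [Matrix.mul_add, Matrix.add_mul, Matrix.mul_smul, Matrix.smul_mul, trace_add,
    trace_smul, smul_eq_mul]

lemma fObj_nonneg (hlam : 0 ≤ lam) (hlamZ : 0 ≤ lamZ) (hlamM : 0 ≤ lamM)
    (ha1 : 0 ≤ a1) (ha2 : 0 ≤ a2) (A Z : Matrix (Fin n) (Fin n) ℝ)
    (H : Matrix (Fin k) (Fin n) ℝ) (hTC : 0 < trace (H * lap C * Hᵀ)) :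
    0 ≤ fObj X W M C lam lamZ lamM a1 a2 A Z H := by
  unfold fObj
  have t1 := frob_sq_nonneg (X - X * A)
  have t2 := frob_sq_nonneg (A - Z)
  have t3 : (0:ℝ) ≤ ∑ i, ∑ j, |Z i j| := by positivity
  have t4 : 0 ≤ a1 * trace (H * lap Z * Hᵀ) / trace (H * lap C * Hᵀ) :=
    div_nonneg (mul_nonneg ha1 (trace_lap_nonneg _ _)) hTC.le
  have t5 : 0 ≤ a2 * trace (H * (lap W + lamM • lap M) * Hᵀ) / trace (H * lap C * Hᵀ) := by
    refine div_nonneg (mul_nonneg ha2 ?_) hTC.le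
    rw [trace_lap_WM]
    exact add_nonneg (trace_lap_nonneg _ _) (mul_nonneg hlamM (trace_lap_nonneg _ _))
  have t6 : 0 ≤ lamZ * (∑ i, ∑ j, |Z i j|) := mul_nonneg hlamZ t3
  nlinarith [mul_nonneg hlam t2]

lemma fObj_Astrong (hlam : 0 < lam) (Z : Matrix (Fin n) (Fin n) ℝ)
    (H : Matrix (Fin k) (Fin n) ℝ) (Astar : Matrix (Fin n) (Fin n) ℝ)
    (hmin : ∀ A, fObj X W M C lam lamZ lamM a1 a2 Astar Z H
      ≤ fObj X W M C lam lamZ lamM a1 a2 A Z H)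
    (A : Matrix (Fin n) (Fin n) ℝ) :
    fObj X W M C lam lamZ lamM a1 a2 Astar Z H + (lam/2) * frob (A - Astar)^2
      ≤ fObj X W M C lam lamZ lamM a1 a2 A Z H := by
  have hr : 0 ≤ frob (A - Astar)^2 := frob_sq_nonneg _
  refine limit_trick (by positivity) hr (fun t ht0 ht1 => ?_)
  set At := (1-t) • Astar + t • A with hAt
  have key : fObj X W M C lam lamZ lamM a1 a2 At Z H
      ≤ (1-t) * fObj X W M C lam lamZ lamM a1 a2 Astar Z H
        + t * fObj X W M C lam lamZ lamM a1 a2 A Z H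
        - (lam/2) * (t*(1-t)) * frob (A - Astar)^2 := by
    unfold fObj
    have e1 : X - X * At = ((1-t) • (X - X * Astar) + t • (X - X * A)) - 0 := by
      rw [hAt, Matrix.mul_add, Matrix.mul_smul, Matrix.mul_smul]
      ext i j
      simp [Matrix.sub_apply, Matrix.add_apply, Matrix.smul_apply, Matrix.mul_apply]
      ring
    have e2 : At - Z = ((1-t) • (Astar - Z) + t • (A - Z)) - 0 := by
      rw [hAt]; ext i j
      simp [Matrix.sub_apply, Matrix.add_apply, Matrix.smul_apply]
      ring
    have f1 : frob (X - X * At)^2 ≤ (1-t) * frob (X - X * Astar)^2 + t * frob (X - X * A)^2 := by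
      rw [e1]
      have := frob_sq_combo (X - X * Astar) (X - X * A) 0 t
      have hnn : 0 ≤ t*(1-t) * frob ((X - X * Astar) - (X - X * A))^2 :=
        mul_nonneg (mul_nonneg ht0.le (by linarith)) (frob_sq_nonneg _)
      rw [show (X - X * Astar) - 0 = X - X * Astar from by simp,
        show (X - X * A) - 0 = X - X * A from by simp] at this
      linarith
    have f2 : frob (At - Z)^2 = (1-t) * frob (Astar - Z)^2 + t * frob (A - Z)^2
        - t*(1-t) * frob (A - Astar)^2 := by
      rw [e2]
      have := frob_sq_combo (Astar - Z) (A - Z) 0 t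
      rw [show (Astar - Z) - 0 = Astar - Z from by simp,
        show (A - Z) - 0 = A - Z from by simp] at this
      rw [this, show (Astar - Z) - (A - Z) = Astar - A from by abel, frob_sq_neg Astar A]
    rw [f2]
    nlinarith [f1]
  have hm := hmin At
  have ht' : 0 < t := ht0
  nlinarith [hm, key]

lemma fObj_Zstrong (hlam : 0 < lam) (hlamZ : 0 < lamZ) (ha1 : 0 < a1)
    (A : Matrix (Fin n) (Fin n) ℝ) (H : Matrix (Fin k) (Fin n) ℝ)
    (hTC : 0 < trace (H * lap C * Hᵀ))
    (Zstar : Matrix (Fin n) (Fin n) ℝ) (hZs : ∀ i, Zstar i i = 0)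
    (hmin : ∀ Z : Matrix (Fin n) (Fin n) ℝ, (∀ i, Z i i = 0) →
      fObj X W M C lam lamZ lamM a1 a2 A Zstar H
        ≤ fObj X W M C lam lamZ lamM a1 a2 A Z H)
    (Z : Matrix (Fin n) (Fin n) ℝ) (hZd : ∀ i, Z i i = 0) :
    fObj X W M C lam lamZ lamM a1 a2 A Zstar H + (lam/2) * frob (Z - Zstar)^2
      ≤ fObj X W M C lam lamZ lamM a1 a2 A Z H := by
  have hr : 0 ≤ frob (Z - Zstar)^2 := frob_sq_nonneg _
  refine limit_trick (by positivity) hr (fun t ht0 ht1 => ?_)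
  set Zt := (1-t) • Zstar + t • Z with hZt
  have hZtd : ∀ i, Zt i i = 0 := by
    intro i
    simp [hZt, Matrix.add_apply, Matrix.smul_apply, hZs i, hZd i]
  have hZte : ∀ i j, Zt i j = (1-t) * Zstar i j + t * Z i j := by
    intro i j; simp [hZt, Matrix.add_apply, Matrix.smul_apply]
  have key : fObj X W M C lam lamZ lamM a1 a2 A Zt H
      ≤ (1-t) * fObj X W M C lam lamZ lamM a1 a2 A Zstar H
        + t * fObj X W M C lam lamZ lamM a1 a2 A Z H
        - (lam/2) * (t*(1-t)) * frob (Z - Zstar)^2 := by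
    unfold fObj
    have f2 : frob (A - Zt)^2 = (1-t) * frob (A - Zstar)^2 + t * frob (A - Z)^2
        - t*(1-t) * frob (Z - Zstar)^2 := by
      have e2 : A - Zt = ((1-t) • (A - Zstar) + t • (A - Z)) - 0 := by
        rw [hZt]; ext i j
        simp [Matrix.sub_apply, Matrix.add_apply, Matrix.smul_apply]
        ring
      rw [e2]
      have := frob_sq_combo (A - Zstar) (A - Z) 0 t
      rw [show (A - Zstar) - 0 = A - Zstar from by simp,
        show (A - Z) - 0 = A - Z from by simp] at this
      rw [this, show (A - Zstar) - (A - Z) = Z - Zstar from by abel]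
    have f3 : (∑ i, ∑ j, |Zt i j|) ≤ (1-t) * (∑ i, ∑ j, |Zstar i j|)
        + t * (∑ i, ∑ j, |Z i j|) := by
      simp only [Finset.mul_sum, ← Finset.sum_add_distrib]
      refine Finset.sum_le_sum (fun i _ => Finset.sum_le_sum (fun j _ => ?_))
      rw [hZte]
      exact abs_combo ht0.le ht1
    have f4 : trace (H * lap Zt * Hᵀ) ≤ (1-t) * trace (H * lap Zstar * Hᵀ)
        + t * trace (H * lap Z * Hᵀ) := by
      rw [trace_lap Zt H, trace_lap Zstar H, trace_lap Z H]
      have hb : ∀ i j : Fin n, |Zt i j| * ((1/2) * ∑ p, (H p i - H p j)^2)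
          ≤ (1-t) * (|Zstar i j| * ((1/2) * ∑ p, (H p i - H p j)^2))
            + t * (|Z i j| * ((1/2) * ∑ p, (H p i - H p j)^2)) := by
        intro i j
        rw [hZte]
        have hc : (0:ℝ) ≤ (1/2) * ∑ p, (H p i - H p j)^2 := by positivity
        calc |(1-t) * Zstar i j + t * Z i j| * ((1/2) * ∑ p, (H p i - H p j)^2)
            ≤ ((1-t) * |Zstar i j| + t * |Z i j|) * ((1/2) * ∑ p, (H p i - H p j)^2) :=
              mul_le_mul_of_nonneg_right (abs_combo ht0.le ht1) hc
          _ = (1-t) * (|Zstar i j| * ((1/2) * ∑ p, (H p i - H p j)^2))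
              + t * (|Z i j| * ((1/2) * ∑ p, (H p i - H p j)^2)) := by ring
      refine le_trans (Finset.sum_le_sum
        (fun i _ => Finset.sum_le_sum (fun j _ => hb i j))) (le_of_eq ?_)
      simp only [Finset.sum_add_distrib, Finset.mul_sum]
    have f5 : a1 * trace (H * lap Zt * Hᵀ) / trace (H * lap C * Hᵀ)
        ≤ (1-t) * (a1 * trace (H * lap Zstar * Hᵀ) / trace (H * lap C * Hᵀ))
          + t * (a1 * trace (H * lap Z * Hᵀ) / trace (H * lap C * Hᵀ)) := by
      rw [show (1-t) * (a1 * trace (H * lap Zstar * Hᵀ) / trace (H * lap C * Hᵀ))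
          + t * (a1 * trace (H * lap Z * Hᵀ) / trace (H * lap C * Hᵀ))
        = a1 * ((1-t) * trace (H * lap Zstar * Hᵀ) + t * trace (H * lap Z * Hᵀ))
            / trace (H * lap C * Hᵀ) from by ring]
      exact div_le_div_of_nonneg_right (mul_le_mul_of_nonneg_left f4 ha1.le) hTC.le
    rw [f2]
    nlinarith [f3, f5, mul_le_mul_of_nonneg_left f3 hlamZ.le]
  have hm := hmin Zt hZtd
  nlinarith [hm, key]

end

theorem dgsl_nonneg_and_summable (n k d : ℕ) (hn : 0 < n) (hk : 0 < k) (hd : 0 < d)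
    (X : Matrix (Fin d) (Fin n) ℝ) (W M C : Matrix (Fin n) (Fin n) ℝ)
    (lam lamZ lamM a1 a2 : ℝ) (hlam : 0 < lam) (hlamZ : 0 < lamZ)
    (hlamM : 0 < lamM) (ha1 : 0 < a1) (ha2 : 0 < a2)
    (hC : ∀ H : Matrix (Fin k) (Fin n) ℝ, H * Hᵀ = 1 → 0 < trace (H * lap C * Hᵀ))
    (Aseq Zseq : ℕ → Matrix (Fin n) (Fin n) ℝ)
    (Hseq : ℕ → Matrix (Fin k) (Fin n) ℝ)
    (hZ0 : ∀ i, Zseq 0 i i = 0) (hH0 : Hseq 0 * (Hseq 0)ᵀ = 1)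
    (hHstep : ∀ t : ℕ, Hseq (t + 1) * (Hseq (t + 1))ᵀ = 1 ∧
      ∀ H : Matrix (Fin k) (Fin n) ℝ, H * Hᵀ = 1 →
        fObj X W M C lam lamZ lamM a1 a2 (Aseq t) (Zseq t) (Hseq (t + 1))
          ≤ fObj X W M C lam lamZ lamM a1 a2 (Aseq t) (Zseq t) H)
    (hAstep : ∀ (t : ℕ) (A : Matrix (Fin n) (Fin n) ℝ),
      fObj X W M C lam lamZ lamM a1 a2 (Aseq (t + 1)) (Zseq t) (Hseq (t + 1))
        ≤ fObj X W M C lam lamZ lamM a1 a2 A (Zseq t) (Hseq (t + 1)))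
    (hZstep : ∀ t : ℕ, (∀ i, Zseq (t + 1) i i = 0) ∧
      ∀ Z : Matrix (Fin n) (Fin n) ℝ, (∀ i, Z i i = 0) →
        fObj X W M C lam lamZ lamM a1 a2 (Aseq (t + 1)) (Zseq (t + 1)) (Hseq (t + 1))
          ≤ fObj X W M C lam lamZ lamM a1 a2 (Aseq (t + 1)) Z (Hseq (t + 1))) :
    (∀ (A Z : Matrix (Fin n) (Fin n) ℝ) (H : Matrix (Fin k) (Fin n) ℝ),
      H * Hᵀ = 1 → 0 ≤ fObj X W M C lam lamZ lamM a1 a2 A Z H) ∧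
    Summable (fun t : ℕ =>
      (lam / 2) * (frob (Zseq (t + 1) - Zseq t) ^ 2
        + frob (Aseq (t + 1) - Aseq t) ^ 2)) ∧
    ∑' t : ℕ, (lam / 2) * (frob (Zseq (t + 1) - Zseq t) ^ 2
        + frob (Aseq (t + 1) - Aseq t) ^ 2)
      ≤ fObj X W M C lam lamZ lamM a1 a2 (Aseq 0) (Zseq 0) (Hseq 0) := by
  have part1 : ∀ (A Z : Matrix (Fin n) (Fin n) ℝ) (H : Matrix (Fin k) (Fin n) ℝ),
      H * Hᵀ = 1 → 0 ≤ fObj X W M C lam lamZ lamM a1 a2 A Z H := fun A Z H hH =>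
    fObj_nonneg X W M C lam lamZ lamM a1 a2 hlam.le hlamZ.le hlamM.le ha1.le ha2.le
      A Z H (hC H hH)
  have horth : ∀ t, Hseq t * (Hseq t)ᵀ = 1 := by
    intro t; cases t with
    | zero => exact hH0
    | succ s => exact (hHstep s).1
  have zdiag : ∀ t i, Zseq t i i = 0 := by
    intro t; cases t with
    | zero => exact hZ0
    | succ s => exact (hZstep s).1
  set F : ℕ → ℝ := fun t => fObj X W M C lam lamZ lamM a1 a2 (Aseq t) (Zseq t) (Hseq t)
    with hF
  set term : ℕ → ℝ := fun t => (lam / 2) * (frob (Zseq (t + 1) - Zseq t) ^ 2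
    + frob (Aseq (t + 1) - Aseq t) ^ 2) with hterm
  have Fnn : ∀ t, 0 ≤ F t := fun t => part1 _ _ _ (horth t)
  have termnn : ∀ t, 0 ≤ term t := fun t =>
    mul_nonneg (by positivity) (add_nonneg (frob_sq_nonneg _) (frob_sq_nonneg _))
  have descent : ∀ t, F (t + 1) + term t ≤ F t := by
    intro t
    have h1 : fObj X W M C lam lamZ lamM a1 a2 (Aseq t) (Zseq t) (Hseq (t+1)) ≤ F t :=
      (hHstep t).2 (Hseq t) (horth t)
    have h2 := fObj_Astrong X W M C lam lamZ lamM a1 a2 hlam (Zseq t) (Hseq (t+1))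
      (Aseq (t+1)) (hAstep t) (Aseq t)
    have h3 := fObj_Zstrong X W M C lam lamZ lamM a1 a2 hlam hlamZ ha1 (Aseq (t+1))
      (Hseq (t+1)) (hC _ (horth (t+1))) (Zseq (t+1)) (zdiag (t+1)) (hZstep t).2
      (Zseq t) (zdiag t)
    rw [frob_sq_neg (Aseq t) (Aseq (t+1))] at h2
    rw [frob_sq_neg (Zseq t) (Zseq (t+1))] at h3
    have hFt1 : F (t+1) = fObj X W M C lam lamZ lamM a1 a2 (Aseq (t+1)) (Zseq (t+1))
      (Hseq (t+1)) := rfl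
    have hterm' : term t = (lam / 2) * frob (Zseq (t + 1) - Zseq t) ^ 2
        + (lam / 2) * frob (Aseq (t + 1) - Aseq t) ^ 2 := by rw [hterm]; ring
    rw [hterm', hFt1]
    linarith
  have partial_bound : ∀ N, ∑ t ∈ Finset.range N, term t ≤ F 0 := by
    have key : ∀ N, F N + ∑ t ∈ Finset.range N, term t ≤ F 0 := by
      intro N; induction N with
      | zero => simp
      | succ m ih =>
        rw [Finset.sum_range_succ]
        have := descent m
        linarith
    intro N
    have h1 := key N
    have h2 := Fnn N
    linarith
  have hsum : Summable term := summable_of_sum_range_le termnn partial_bound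
  exact ⟨part1, hsum, Summable.tsum_le_of_sum_range_le hsum partial_bound⟩
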